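/- arXiv:2511.06314 — 2 statements merged into one kernel-verified Lean document; each statement's English description precedes it below -/
import Mathlib

section
/- Let M be a nonempty type, i : M → M → ℝ a nonnegative function, A : M → ℝ a nonnegative function, and for each t ∈ ℝ let E t : M → ℝ be positive. Fix F ∈ M, and assume: (1) for all t and all F', E t F * E t F' ≥ (i F F')^2; (2) for all t and all F', Real.exp (-2*t) * E t F' ≥ A F'; (3) for all F', the function t ↦ Real.exp (-2*t) * E t F' tends to A F' as t → ∞; (4) for every t there exists H ∈ M with E t F * E t H = (i F H)^2. Then, with S := ⨆ F', ((i F F')^2 / A F' : ℝ≥0∞) (where division by zero in ℝ≥0∞ of a positive number is ∞), the function t ↦ ((Real.exp (2*t) * E t F : ℝ≥0) : ℝ≥0∞) tends to S as t → ∞. -/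
open Filter

theorem stmt_5 {M : Type*} [Nonempty M] (i : M → M → ℝ)
    (hi : ∀ F F', 0 ≤ i F F')
    (A : M → ℝ) (hA : ∀ F', 0 ≤ A F')
    (E : ℝ → M → ℝ) (hE : ∀ t F', 0 < E t F')
    (F : M)
    (h1 : ∀ t F', E t F * E t F' ≥ (i F F') ^ 2)
    (h2 : ∀ t F', Real.exp (-2 * t) * E t F' ≥ A F')
    (h3 : ∀ F', Tendsto (fun t => Real.exp (-2 * t) * E t F') atTop (nhds (A F')))
    (h4 : ∀ t, ∃ H, E t F * E t H = (i F H) ^ 2) :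
    Tendsto (fun t => ENNReal.ofReal (Real.exp (2 * t) * E t F)) atTop
      (nhds (⨆ F', ENNReal.ofReal ((i F F') ^ 2) / ENNReal.ofReal (A F'))) := by
  set S := ⨆ F', ENNReal.ofReal ((i F F') ^ 2) / ENNReal.ofReal (A F') with hS
  have hexp : ∀ t : ℝ, Real.exp (2 * t) * Real.exp (-2 * t) = 1 := by
    intro t; rw [← Real.exp_add]; norm_num
  have key : ∀ t F', ENNReal.ofReal ((i F F') ^ 2) /
      ENNReal.ofReal (Real.exp (-2 * t) * E t F')
      ≤ ENNReal.ofReal (Real.exp (2 * t) * E t F) := by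
    intro t F'
    apply ENNReal.div_le_of_le_mul
    rw [← ENNReal.ofReal_mul (mul_pos (Real.exp_pos _) (hE t F)).le]
    apply ENNReal.ofReal_le_ofReal
    have : Real.exp (2 * t) * E t F * (Real.exp (-2 * t) * E t F')
        = Real.exp (2 * t) * Real.exp (-2 * t) * (E t F * E t F') := by ring
    rw [this, hexp, one_mul]
    exact h1 t F'
  have upper : ∀ t, ENNReal.ofReal (Real.exp (2 * t) * E t F) ≤ S := by
    intro t
    obtain ⟨H, hH⟩ := h4 t
    have hpos : 0 < Real.exp (-2 * t) * E t H := mul_pos (Real.exp_pos _) (hE t H)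
    have heq : Real.exp (2 * t) * E t F * (Real.exp (-2 * t) * E t H) = (i F H) ^ 2 := by
      have : Real.exp (2 * t) * E t F * (Real.exp (-2 * t) * E t H)
          = Real.exp (2 * t) * Real.exp (-2 * t) * (E t F * E t H) := by ring
      rw [this, hexp, one_mul, hH]
    have hreal : Real.exp (2 * t) * E t F = (i F H) ^ 2 / (Real.exp (-2 * t) * E t H) := by
      rw [eq_div_iff hpos.ne']; exact heq
    calc ENNReal.ofReal (Real.exp (2 * t) * E t F)
        = ENNReal.ofReal ((i F H) ^ 2 / (Real.exp (-2 * t) * E t H)) := by rw [hreal]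
      _ = ENNReal.ofReal ((i F H) ^ 2) / ENNReal.ofReal (Real.exp (-2 * t) * E t H) :=
          ENNReal.ofReal_div_of_pos hpos
      _ ≤ ENNReal.ofReal ((i F H) ^ 2) / ENNReal.ofReal (A H) :=
          ENNReal.div_le_div_left (ENNReal.ofReal_le_ofReal (h2 t H)) _
      _ ≤ S := le_iSup (fun F' => ENNReal.ofReal ((i F F') ^ 2) / ENNReal.ofReal (A F')) H
  have lower : S ≤ atTop.liminf (fun t => ENNReal.ofReal (Real.exp (2 * t) * E t F)) := by
    rw [hS]
    apply iSup_le
    intro F'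
    have hg : Tendsto (fun t => ENNReal.ofReal ((i F F') ^ 2) /
        ENNReal.ofReal (Real.exp (-2 * t) * E t F')) atTop
        (nhds (ENNReal.ofReal ((i F F') ^ 2) / ENNReal.ofReal (A F'))) := by
      simp only [div_eq_mul_inv]
      exact ENNReal.Tendsto.const_mul
        ((ENNReal.tendsto_ofReal (h3 F')).inv)
        (Or.inr ENNReal.ofReal_ne_top)
    calc ENNReal.ofReal ((i F F') ^ 2) / ENNReal.ofReal (A F')
        = atTop.liminf (fun t => ENNReal.ofReal ((i F F') ^ 2) /
            ENNReal.ofReal (Real.exp (-2 * t) * E t F')) := hg.liminf_eq.symm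
      _ ≤ atTop.liminf (fun t => ENNReal.ofReal (Real.exp (2 * t) * E t F)) :=
          liminf_le_liminf (Eventually.of_forall (fun t => key t F'))
  exact tendsto_of_le_liminf_of_limsup_le lower
    (limsup_le_of_le (by isBoundedDefault) (Eventually.of_forall upper))
end

section
/- Let n ≥ 1 and α : Fin n → ℝ be positive, and set P := max over j of α j, Q := max over j of (α j)⁻¹. Then with s₀ := Real.sqrt (P / Q) one has s₀ > 0 and max over j of (max (α j / s₀) (s₀ / (α j))) = Real.sqrt (P * Q). Consequently the infimum over s > 0 of max_j max{α j / s, s / α j} equals Real.sqrt (P * Q) and is attained. -/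
theorem stmt_10 (n : ℕ) (hn : 1 ≤ n) (α : Fin n → ℝ) (hα : ∀ j, 0 < α j)
    (P Q : ℝ)
    (hP : P = Finset.univ.sup' ⟨⟨0, hn⟩, Finset.mem_univ _⟩ α)
    (hQ : Q = Finset.univ.sup' ⟨⟨0, hn⟩, Finset.mem_univ _⟩ (fun j => (α j)⁻¹)) :
    0 < Real.sqrt (P / Q) ∧
    Finset.univ.sup' ⟨⟨0, hn⟩, Finset.mem_univ _⟩
        (fun j => max (α j / Real.sqrt (P / Q)) (Real.sqrt (P / Q) / α j))
      = Real.sqrt (P * Q) ∧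
    IsLeast {r : ℝ | ∃ s : ℝ, 0 < s ∧
        r = Finset.univ.sup' ⟨⟨0, hn⟩, Finset.mem_univ _⟩
              (fun j => max (α j / s) (s / α j))}
      (Real.sqrt (P * Q)) := by
  have H : (Finset.univ : Finset (Fin n)).Nonempty := ⟨⟨0, hn⟩, Finset.mem_univ _⟩
  have hP0 : 0 < P := by
    rw [hP]
    exact lt_of_lt_of_le (hα ⟨0, hn⟩) (Finset.le_sup' α (Finset.mem_univ _))
  have hQ0 : 0 < Q := by
    rw [hQ]
    exact lt_of_lt_of_le (inv_pos.2 (hα ⟨0, hn⟩))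
      (Finset.le_sup' (fun j => (α j)⁻¹) (Finset.mem_univ ⟨0, hn⟩))
  have key : ∀ s : ℝ, 0 < s →
      Finset.univ.sup' H (fun j => max (α j / s) (s / α j)) = max (P / s) (s * Q) := by
    intro s hs
    apply le_antisymm
    · apply Finset.sup'_le
      intro j _
      have h1 : α j ≤ P := hP ▸ Finset.le_sup' α (Finset.mem_univ j)
      have h2 : (α j)⁻¹ ≤ Q := hQ ▸ Finset.le_sup' (fun j => (α j)⁻¹) (Finset.mem_univ j)
      refine max_le_max (by gcongr) ?_
      rw [div_eq_mul_inv]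
      exact mul_le_mul_of_nonneg_left h2 hs.le
    · apply max_le
      · obtain ⟨j, _, hj⟩ := Finset.exists_mem_eq_sup' H α
        have : P / s = α j / s := by rw [hP, hj]
        rw [this]
        exact le_trans (le_max_left _ _) (Finset.le_sup' (fun j => max (α j / s) (s / α j)) (Finset.mem_univ j))
      · obtain ⟨j, _, hj⟩ := Finset.exists_mem_eq_sup' H (fun j => (α j)⁻¹)
        have : s * Q = s / α j := by rw [hQ, hj, div_eq_mul_inv]
        rw [this]
        exact le_trans (le_max_right _ _) (Finset.le_sup' (fun j => max (α j / s) (s / α j)) (Finset.mem_univ j))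
  set a := Real.sqrt P with ha
  set b := Real.sqrt Q with hb
  have ha0 : 0 < a := Real.sqrt_pos.2 hP0
  have hb0 : 0 < b := Real.sqrt_pos.2 hQ0
  have hPa : P = a * a := (Real.mul_self_sqrt hP0.le).symm
  have hQb : Q = b * b := (Real.mul_self_sqrt hQ0.le).symm
  have hdiv : Real.sqrt (P / Q) = a / b := Real.sqrt_div hP0.le Q
  have hmul : Real.sqrt (P * Q) = a * b := Real.sqrt_mul hP0.le Q
  have hs0 : 0 < Real.sqrt (P / Q) := by
    rw [hdiv]; exact div_pos ha0 hb0
  have hmax : max (P / Real.sqrt (P / Q)) (Real.sqrt (P / Q) * Q) = Real.sqrt (P * Q) := by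
    rw [hdiv, hmul]
    have e1 : P / (a / b) = a * b := by rw [hPa]; field_simp
    have e2 : a / b * Q = a * b := by rw [hQb]; field_simp
    rw [e1, e2, max_self]
  have lower : ∀ s : ℝ, 0 < s → Real.sqrt (P * Q) ≤ max (P / s) (s * Q) := by
    intro s hs
    have hx : 0 ≤ P / s := (div_pos hP0 hs).le
    have hy : 0 ≤ s * Q := (mul_pos hs hQ0).le
    have hprod : P * Q = (P / s) * (s * Q) := by field_simp
    have hm : 0 ≤ max (P / s) (s * Q) := le_trans hx (le_max_left _ _)
    calc Real.sqrt (P * Q) = Real.sqrt ((P / s) * (s * Q)) := by rw [hprod]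
      _ ≤ Real.sqrt (max (P / s) (s * Q) * max (P / s) (s * Q)) :=
          Real.sqrt_le_sqrt (mul_le_mul (le_max_left _ _) (le_max_right _ _) hy hm)
      _ = max (P / s) (s * Q) := Real.sqrt_mul_self hm
  refine ⟨hs0, (key _ hs0).trans hmax, ⟨Real.sqrt (P / Q), hs0, ((key _ hs0).trans hmax).symm⟩, ?_⟩
  rintro r ⟨s, hs, rfl⟩
  rw [key s hs]
  exact lower s hs
end
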